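/- arXiv:2111.02204 — 4 statements merged into one kernel-verified Lean document; each statement's English description precedes it below -/
import Mathlib

section
/- Suppose S_γ is orthogonally monotone, a* ∈ S_γ, s* ∈ ℝ_+^d with coordinates s*_i ≥ 0, and f*(x) = f(x)e^{s*·x − λ(s*)} ≥ ε' > 0 for all x with a* ≤ x ≤ a* + ε𝟙. Then P(X ∈ S_γ) ≥ e^{−I(a*)} ε' ∏_{i=1}^d (1 − e^{−s*_i ε})/s*_i, where I(a*) = s*·a* − λ(s*) and the factor (1−e^{−s*_i ε})/s*_i is interpreted as ε when s*_i = 0. -/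
open MeasureTheory Matrix

lemma one_dim_ne (s a ε : ℝ) (hε : 0 < ε) (hs : s ≠ 0) :
    ∫ t in Set.Icc a (a+ε), Real.exp (-(s*t)) =
      Real.exp (-(s*a)) * ((1 - Real.exp (-(s*ε)))/s) := by
  rw [MeasureTheory.integral_Icc_eq_integral_Ioc,
    ← intervalIntegral.integral_of_le (by linarith)]
  have hderiv : ∀ t ∈ Set.uIcc a (a+ε),
      HasDerivAt (fun t => -Real.exp (-(s*t))/s) (Real.exp (-(s*t))) t := by
    intro t _
    have h1 : HasDerivAt (fun t : ℝ => -(s*t)) (-s) t := by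
      have h0 : HasDerivAt (fun t : ℝ => -(s * id t)) (-(s*1)) t := ((hasDerivAt_id t).const_mul s).neg
      simpa using h0
    have h3 := (h1.exp.neg).div_const s
    refine h3.congr_deriv ?_
    field_simp
  rw [intervalIntegral.integral_eq_sub_of_hasDerivAt hderiv
    ((Real.continuous_exp.comp (by continuity)).intervalIntegrable a (a+ε))]
  have : -(s*(a+ε)) = -(s*a) + -(s*ε) := by ring
  rw [this, Real.exp_add]
  field_simp
  ring

lemma one_dim (s a ε : ℝ) (hε : 0 < ε) :
    ∫ t in Set.Icc a (a+ε), Real.exp (-(s*t)) =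
      Real.exp (-(s*a)) * (if s = 0 then ε else (1 - Real.exp (-(s*ε)))/s) := by
  by_cases hs : s = 0
  · simp [hs, Real.volume_Icc, ENNReal.toReal_ofReal hε.le, hε.le]
  · rw [one_dim_ne s a ε hε hs, if_neg hs]

/-- Lower bound on the rare-event probability for an orthogonally monotone set:
if the tilted density `f*(x) = f(x)e^{s*·x − λ(s*)}` is at least `ε'` on the
rectangle `[a*, a* + ε𝟙]`, then
`P(X ∈ S_γ) ≥ e^{−I(a*)} ε' ∏ᵢ (1 − e^{−s*ᵢ ε})/s*ᵢ`, with
`I(a*) = s*·a* − λ(s*)` and the factor interpreted as `ε` when `s*ᵢ = 0`. -/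
theorem stmt_10 (d : ℕ) (f : (Fin d → ℝ) → ℝ)
    (hf0 : ∀ x, 0 ≤ f x) (hfm : Measurable f)
    (hfint : Integrable f (volume : Measure (Fin d → ℝ)))
    (hf1 : ∫ x, f x = 1)
    (S : Set (Fin d → ℝ)) (hSm : MeasurableSet S)
    (hSpos : S ⊆ {x | ∀ i, 0 ≤ x i})
    (hmono : ∀ x x' : Fin d → ℝ, (∀ i, 0 ≤ x i) → (∀ i, 0 ≤ x' i) →
      (∀ i, x i ≤ x' i) → x ∈ S → x' ∈ S)
    (astar : Fin d → ℝ) (ha : astar ∈ S)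
    (sstar : Fin d → ℝ) (hs : ∀ i, 0 ≤ sstar i)
    (lam ε ε' : ℝ) (hε : 0 < ε) (hε' : 0 < ε')
    (hlb : ∀ x : Fin d → ℝ, (∀ i, astar i ≤ x i ∧ x i ≤ astar i + ε) →
      ε' ≤ f x * Real.exp (sstar ⬝ᵥ x - lam)) :
    Real.exp (-(sstar ⬝ᵥ astar - lam)) * ε' *
        (∏ i, if sstar i = 0 then ε else (1 - Real.exp (-(sstar i * ε))) / sstar i)
      ≤ ∫ x in S, f x := by
  set R : Set (Fin d → ℝ) := Set.univ.pi (fun i => Set.Icc (astar i) (astar i + ε)) with hR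
  have hRmem : ∀ x, x ∈ R ↔ ∀ i, astar i ≤ x i ∧ x i ≤ astar i + ε := by
    intro x; simp [hR, Set.mem_pi, Set.mem_Icc, Pi.le_def, forall_and]
  have hRmeas : MeasurableSet R :=
    MeasurableSet.univ_pi (fun i => measurableSet_Icc)
  have hapos : ∀ i, 0 ≤ astar i := hSpos ha
  have hRS : R ⊆ S := by
    intro x hx
    rw [hRmem] at hx
    exact hmono astar x hapos (fun i => le_trans (hapos i) (hx i).1)
      (fun i => (hx i).1) ha
  set g : (Fin d → ℝ) → ℝ :=
    fun x => (ε' * Real.exp lam) * ∏ i, Real.exp (-(sstar i * x i)) with hg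
  have hgcont : Continuous g := by
    apply Continuous.mul continuous_const
    exact continuous_finset_prod _ fun i _ =>
      Real.continuous_exp.comp ((continuous_const.mul (continuous_apply i)).neg)
  have hRcompact : IsCompact R := isCompact_univ_pi (fun i => isCompact_Icc)
  have hgint : IntegrableOn g R := hgcont.continuousOn.integrableOn_compact hRcompact
  have hgval : ∀ x, g x = ε' * Real.exp (-(sstar ⬝ᵥ x - lam)) := by
    intro x
    rw [hg]
    simp only
    rw [← Real.exp_sum]
    have : (∑ i, -(sstar i * x i)) = -(sstar ⬝ᵥ x) := by
      simp [dotProduct, Finset.sum_neg_distrib]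
    rw [this, show -(sstar ⬝ᵥ x - lam) = lam + -(sstar ⬝ᵥ x) by ring, Real.exp_add]
    ring
  have key : ∀ x ∈ R, g x ≤ f x := by
    intro x hx
    have h := hlb x ((hRmem x).1 hx)
    rw [hgval]
    have hpos : 0 < Real.exp (sstar ⬝ᵥ x - lam) := Real.exp_pos _
    rw [Real.exp_neg]
    calc ε' * (Real.exp (sstar ⬝ᵥ x - lam))⁻¹ ≤
        f x * Real.exp (sstar ⬝ᵥ x - lam) * (Real.exp (sstar ⬝ᵥ x - lam))⁻¹ := by
          apply mul_le_mul_of_nonneg_right h (by positivity)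
      _ = f x := by field_simp
  have step1 : ∫ x in R, g x ≤ ∫ x in R, f x :=
    setIntegral_mono_on hgint (hfint.integrableOn) hRmeas key
  have step2 : ∫ x in R, f x ≤ ∫ x in S, f x := by
    apply setIntegral_mono_set (hfint.integrableOn)
    · exact Filter.Eventually.of_forall hf0
    · exact Filter.Eventually.of_forall hRS
  -- compute ∫ x in R, g x
  have indic : ∀ x, R.indicator (fun x => ∏ i, Real.exp (-(sstar i * x i))) x =
      ∏ i, (Set.Icc (astar i) (astar i + ε)).indicator
        (fun t => Real.exp (-(sstar i * t))) (x i) := by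
    intro x
    by_cases hx : x ∈ R
    · rw [Set.indicator_of_mem hx]
      apply Finset.prod_congr rfl
      intro i _
      rw [Set.indicator_of_mem]
      exact Set.mem_Icc.2 ((hRmem x).1 hx i)
    · rw [Set.indicator_of_notMem hx]
      obtain ⟨i, hi⟩ : ∃ i, x i ∉ Set.Icc (astar i) (astar i + ε) := by
        by_contra hcon
        push_neg at hcon
        exact hx fun i _ => hcon i
      exact (Finset.prod_eq_zero (Finset.mem_univ i)
        (Set.indicator_of_notMem hi _)).symm
  have calcg : ∫ x in R, g x =
      Real.exp (-(sstar ⬝ᵥ astar - lam)) * ε' *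
        (∏ i, if sstar i = 0 then ε else (1 - Real.exp (-(sstar i * ε))) / sstar i) := by
    have h1 : ∫ x in R, g x = (ε' * Real.exp lam) *
        ∫ x in R, ∏ i, Real.exp (-(sstar i * x i)) := by
      rw [hg]; exact integral_const_mul _ _
    rw [h1, ← integral_indicator hRmeas]
    have h2 : ∫ x : Fin d → ℝ, R.indicator (fun x => ∏ i, Real.exp (-(sstar i * x i))) x
        = ∏ i, ∫ t : ℝ, (Set.Icc (astar i) (astar i + ε)).indicator
            (fun t => Real.exp (-(sstar i * t))) t := by
      rw [← MeasureTheory.integral_fintype_prod_eq_prod (ι := Fin d)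
        (fun i t => (Set.Icc (astar i) (astar i + ε)).indicator
          (fun t => Real.exp (-(sstar i * t))) t)]
      exact integral_congr_ae (Filter.Eventually.of_forall indic)
    rw [h2]
    have h3 : ∀ i : Fin d, ∫ t : ℝ, (Set.Icc (astar i) (astar i + ε)).indicator
        (fun t => Real.exp (-(sstar i * t))) t =
        Real.exp (-(sstar i * astar i)) *
          (if sstar i = 0 then ε else (1 - Real.exp (-(sstar i * ε))) / sstar i) := by
      intro i
      rw [integral_indicator measurableSet_Icc]
      exact one_dim (sstar i) (astar i) ε hε
    rw [Finset.prod_congr rfl (fun i _ => h3 i), Finset.prod_mul_distrib,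
      ← Real.exp_sum]
    have : (∑ i, -(sstar i * astar i)) = -(sstar ⬝ᵥ astar) := by
      simp [dotProduct, Finset.sum_neg_distrib]
    rw [this]
    rw [show -(sstar ⬝ᵥ astar - lam) = lam + -(sstar ⬝ᵥ astar) by ring, Real.exp_add]
    ring
  linarith [step1, step2, calcg ▸ step1]
end

section
/- Let S_γ = ⋃_j S_γ^j be a disjoint decomposition with S_γ^j ⊂ {x : s_j·(x − a_j) ≥ 0}, and let the IS density be p̃(x) = f(x) ∑_j α_j e^{s_j·x − λ(s_j)} with α_j > 0, ∑_j α_j = 1. Then the IS estimator Z = 1(X ∈ S_γ) L(X) with L(x) = (∑_j α_j e^{s_j·x − λ(s_j)})^{−1} satisfies Ẽ[Z²] ≤ (∑_j α_j^{−2}) e^{−2 min_j I(a_j)}, where I(a_j) = s_j·a_j − λ(s_j). -/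
open MeasureTheory Matrix

/-- Second-moment bound for the mixture importance sampler built from the
dominating-point decomposition `S = ⋃ⱼ Sⱼ`, `Sⱼ ⊆ {x : sⱼ·(x − aⱼ) ≥ 0}`:
`Ẽ[Z²] ≤ (∑ⱼ αⱼ⁻²) e^{−2 minⱼ I(aⱼ)}` where `I(aⱼ) = sⱼ·aⱼ − λ(sⱼ)`. -/
theorem stmt_11 (d : ℕ) {ι : Type} [Fintype ι] [Nonempty ι]
    (f : (Fin d → ℝ) → ℝ) (hf0 : ∀ x, 0 ≤ f x) (hfm : Measurable f)
    (hfint : Integrable f (volume : Measure (Fin d → ℝ)))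
    (hf1 : ∫ x, f x = 1)
    (s a : ι → (Fin d → ℝ)) (lam α : ι → ℝ)
    (hα : ∀ j, 0 < α j) (hαsum : ∑ j, α j = 1)
    (hcgf : ∀ j, Real.exp (lam j) = ∫ x, Real.exp (s j ⬝ᵥ x) * f x)
    (hcgfint : ∀ j, Integrable (fun x => Real.exp (s j ⬝ᵥ x) * f x)
      (volume : Measure (Fin d → ℝ)))
    (S : Set (Fin d → ℝ)) (Sj : ι → Set (Fin d → ℝ))
    (hSjm : ∀ j, MeasurableSet (Sj j))
    (hdisj : Pairwise (Function.onFun Disjoint Sj))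
    (hcover : S = ⋃ j, Sj j)
    (hhalf : ∀ j, ∀ x ∈ Sj j, 0 ≤ s j ⬝ᵥ (x - a j)) :
    ∫ x in S, ((∑ j, α j * Real.exp (s j ⬝ᵥ x - lam j))⁻¹) ^ 2 *
        (f x * ∑ j, α j * Real.exp (s j ⬝ᵥ x - lam j))
      ≤ (∑ j, ((α j)⁻¹) ^ 2) *
        Real.exp (-2 * Finset.univ.inf' Finset.univ_nonempty
          (fun j => s j ⬝ᵥ a j - lam j)) := by
  classical
  set P : (Fin d → ℝ) → ℝ := fun x => ∑ j, α j * Real.exp (s j ⬝ᵥ x - lam j) with hPdef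
  set m : ℝ := Finset.univ.inf' Finset.univ_nonempty (fun j => s j ⬝ᵥ a j - lam j) with hmdef
  set C : ι → ℝ := fun j => ((α j)⁻¹) ^ 2 * Real.exp (-2 * (s j ⬝ᵥ a j - lam j)) with hCdef
  set g : (Fin d → ℝ) → ℝ := fun x => ((P x)⁻¹) ^ 2 * (f x * P x) with hgdef
  have hPpos : ∀ x, 0 < P x := fun x =>
    Finset.sum_pos (fun j _ => mul_pos (hα j) (Real.exp_pos _)) Finset.univ_nonempty
  have hdotm : ∀ j, Measurable fun x : Fin d → ℝ => s j ⬝ᵥ x := by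
    intro j
    simpa [dotProduct] using Finset.measurable_sum Finset.univ
      (fun i (_ : i ∈ Finset.univ) => Measurable.const_mul (f := fun x : Fin d → ℝ => x i) (measurable_pi_apply i) (s j i))
  have hPmeas : Measurable P := by
    apply Finset.measurable_sum
    intro j _
    exact (((hdotm j).sub_const (lam j)).exp).const_mul (α j)
  have hgmeas : Measurable g := ((hPmeas.inv).pow_const 2).mul (hfm.mul hPmeas)
  have hfP_eq : ∀ x, f x * P x
      = ∑ j, (α j * Real.exp (-(lam j))) * (Real.exp (s j ⬝ᵥ x) * f x) := by
    intro x
    rw [hPdef, Finset.mul_sum]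
    refine Finset.sum_congr rfl fun j _ => ?_
    rw [Real.exp_sub, Real.exp_neg]
    ring
  have hfP_int : Integrable (fun x => f x * P x) := by
    have h : (fun x => f x * P x)
        = fun x => ∑ j, (α j * Real.exp (-(lam j))) * (Real.exp (s j ⬝ᵥ x) * f x) :=
      funext hfP_eq
    rw [h]
    exact integrable_finset_sum _ fun j _ => (hcgfint j).const_mul _
  have hfP_nonneg : ∀ x, 0 ≤ f x * P x := fun x => mul_nonneg (hf0 x) (hPpos x).le
  have hfP1 : ∫ x, f x * P x = 1 := by
    simp_rw [hfP_eq]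
    rw [integral_finset_sum _ fun j _ => (hcgfint j).const_mul _]
    have h : ∀ j ∈ Finset.univ, (∫ x, (α j * Real.exp (-(lam j))) * (Real.exp (s j ⬝ᵥ x) * f x))
        = α j := by
      intro j _
      rw [integral_const_mul, ← hcgf j, Real.exp_neg]
      field_simp
    rw [Finset.sum_congr rfl h]
    exact hαsum
  have hCnn : ∀ j, 0 ≤ C j := fun j => mul_nonneg (sq_nonneg _) (Real.exp_pos _).le
  have hkey : ∀ j, ∀ x ∈ Sj j, ((P x)⁻¹) ^ 2 ≤ C j := by
    intro j x hx
    have hx' : s j ⬝ᵥ a j - lam j ≤ s j ⬝ᵥ x - lam j := by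
      have h := hhalf j x hx
      rw [dotProduct_sub] at h
      linarith
    have h1 : α j * Real.exp (s j ⬝ᵥ a j - lam j) ≤ P x := by
      have h2 : α j * Real.exp (s j ⬝ᵥ x - lam j) ≤ P x := by
        rw [hPdef]
        exact Finset.single_le_sum (f := fun i => α i * Real.exp (s i ⬝ᵥ x - lam i))
          (fun i _ => mul_nonneg (hα i).le (Real.exp_pos _).le) (Finset.mem_univ j)
      exact le_trans (mul_le_mul_of_nonneg_left (Real.exp_le_exp.2 hx') (hα j).le) h2
    have hb : 0 < α j * Real.exp (s j ⬝ᵥ a j - lam j) := mul_pos (hα j) (Real.exp_pos _)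
    have h2 : (P x)⁻¹ ≤ (α j * Real.exp (s j ⬝ᵥ a j - lam j))⁻¹ :=
      inv_anti₀ hb h1
    calc ((P x)⁻¹) ^ 2 ≤ ((α j * Real.exp (s j ⬝ᵥ a j - lam j))⁻¹) ^ 2 :=
          pow_le_pow_left₀ (inv_nonneg.2 (hPpos x).le) h2 2
      _ = C j := by
          rw [hCdef]
          rw [mul_inv, mul_pow, ← Real.exp_neg, sq (Real.exp _), ← Real.exp_add]
          congr 2
          ring
  have hIntOnSj : ∀ j, IntegrableOn g (Sj j) volume := by
    intro j
    apply Integrable.mono' ((hfP_int.const_mul (C j)).integrableOn)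
      hgmeas.aestronglyMeasurable.restrict
    filter_upwards [ae_restrict_mem (hSjm j)] with x hx
    rw [Real.norm_eq_abs, abs_of_nonneg (mul_nonneg (sq_nonneg _) (hfP_nonneg x))]
    exact mul_le_mul_of_nonneg_right (hkey j x hx) (hfP_nonneg x)
  have hSjle : ∀ j, ∫ x in Sj j, g x ≤ C j := by
    intro j
    have h1 : ∫ x in Sj j, g x ≤ ∫ x in Sj j, C j * (f x * P x) := by
      apply setIntegral_mono_on (hIntOnSj j) ((hfP_int.const_mul (C j)).integrableOn) (hSjm j)
      intro x hx
      exact mul_le_mul_of_nonneg_right (hkey j x hx) (hfP_nonneg x)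
    have h3 : ∫ x in Sj j, f x * P x ≤ ∫ x, f x * P x :=
      setIntegral_le_integral hfP_int (Filter.Eventually.of_forall fun x => hfP_nonneg x)
    calc ∫ x in Sj j, g x ≤ ∫ x in Sj j, C j * (f x * P x) := h1
      _ = C j * ∫ x in Sj j, f x * P x := integral_const_mul _ _
      _ ≤ C j * 1 := mul_le_mul_of_nonneg_left (hfP1 ▸ h3) (hCnn j)
      _ = C j := mul_one _
  have hCle : ∀ j, C j ≤ ((α j)⁻¹) ^ 2 * Real.exp (-2 * m) := by
    intro j
    have hm : m ≤ s j ⬝ᵥ a j - lam j := Finset.inf'_le _ (Finset.mem_univ j)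
    exact mul_le_mul_of_nonneg_left (Real.exp_le_exp.2 (by linarith)) (sq_nonneg _)
  show ∫ x in S, g x ≤ (∑ j, ((α j)⁻¹) ^ 2) * Real.exp (-2 * m)
  rw [hcover]
  calc ∫ x in ⋃ j, Sj j, g x = ∑ j, ∫ x in Sj j, g x :=
        integral_iUnion_fintype hSjm hdisj hIntOnSj
    _ ≤ ∑ j, C j := Finset.sum_le_sum fun j _ => hSjle j
    _ ≤ ∑ j, ((α j)⁻¹) ^ 2 * Real.exp (-2 * m) := Finset.sum_le_sum fun j _ => hCle j
    _ = (∑ j, ((α j)⁻¹) ^ 2) * Real.exp (-2 * m) := (Finset.sum_mul ..).symm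
end

section
/- In the setting of the previous statement with 0 < k ≤ 1, the ratio Ẽ[Z²]/Ẽ[Z]² grows exponentially in γ; specifically Ẽ[Z] = O(e^{−k²γ²/2}/γ) and Ẽ[Z²] = O(e^{γ²}) as γ → ∞, so the single-dominating-point IS estimator fails to be logarithmically efficient. -/
open MeasureTheory ProbabilityTheory Filter Asymptotics

set_option maxHeartbeats 800000

open MeasureTheory ProbabilityTheory Set Real


noncomputable def gtail (t : ℝ) : ℝ := ((gaussianReal 0 1) (Set.Ici t)).toReal

lemma Gt_anti : Antitone gtail := fun s t hst => by
  unfold gtail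
  exact ENNReal.toReal_mono (measure_ne_top _ _) (measure_mono (Set.Ici_subset_Ici.mpr hst))

lemma Gt_le_one (t : ℝ) : gtail t ≤ 1 := by
  unfold gtail
  rw [← ENNReal.toReal_one]
  exact ENNReal.toReal_mono ENNReal.one_ne_top prob_le_one

lemma Gt_pos (t : ℝ) : 0 < gtail t := by
  unfold gtail
  refine ENNReal.toReal_pos ?_ (measure_ne_top _ _)
  intro h
  have := (gaussianReal_absolutelyContinuous' 0 one_ne_zero) h
  simp [Real.volume_Ici] at this

lemma Gt_nonneg (t : ℝ) : 0 ≤ gtail t := (Gt_pos t).le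

lemma Gt_eq (t : ℝ) : gtail t = ∫ x in Ici t, gaussianPDFReal 0 1 x := by
  unfold gtail
  rw [gaussianReal_apply_eq_integral 0 one_ne_zero,
    ENNReal.toReal_ofReal (setIntegral_nonneg measurableSet_Ici
      (fun x _ => gaussianPDFReal_nonneg 0 1 x))]

lemma Gt_tail {t : ℝ} (ht : 0 < t) : gtail t ≤ Real.exp (-t ^ 2 / 2) / t := by
  rw [Gt_eq]
  have hpdf : ∀ x ∈ Ici t, gaussianPDFReal 0 1 x ≤ Real.exp (t ^ 2 / 2) * Real.exp (-(t * x)) := by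
    intro x _
    rw [gaussianPDFReal_def]
    simp only [NNReal.coe_one, mul_one, sub_zero, ← Real.exp_add]
    have h1 : (Real.sqrt (2 * π))⁻¹ ≤ 1 := by
      rw [inv_le_one_iff₀]
      right
      rw [show (1:ℝ) = Real.sqrt 1 by simp]
      exact Real.sqrt_le_sqrt (by nlinarith [pi_gt_three])
    have h2 : Real.exp (-x ^ 2 / 2) ≤ Real.exp (t ^ 2 / 2 + -(t * x)) := by
      apply Real.exp_le_exp.mpr; nlinarith [sq_nonneg (x - t)]
    calc (Real.sqrt (2 * π))⁻¹ * Real.exp (-x ^ 2 / 2)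
        ≤ 1 * Real.exp (t ^ 2 / 2 + -(t * x)) :=
          mul_le_mul h1 h2 (Real.exp_nonneg _) one_pos.le
      _ = Real.exp (t ^ 2 / 2 + -(t * x)) := one_mul _
  have hint : IntegrableOn (fun x => Real.exp (t ^ 2 / 2) * Real.exp (-(t * x))) (Ici t) := by
    rw [integrableOn_Ici_iff_integrableOn_Ioi]
    have h := (exp_neg_integrableOn_Ioi t ht).const_mul (Real.exp (t ^ 2 / 2))
    simp only [neg_mul] at h
    exact h
  have hle : ∫ x in Ici t, gaussianPDFReal 0 1 x
      ≤ ∫ x in Ici t, Real.exp (t ^ 2 / 2) * Real.exp (-(t * x)) :=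
    setIntegral_mono_on ((integrable_gaussianPDFReal 0 1).integrableOn) hint
      measurableSet_Ici hpdf
  refine hle.trans_eq ?_
  rw [integral_Ici_eq_integral_Ioi, integral_const_mul,
    integral_comp_mul_left_Ioi (fun x => Real.exp (-x)) t ht,
    integral_exp_neg_Ioi]
  rw [smul_eq_mul, mul_comm t⁻¹, ← mul_assoc, ← Real.exp_add, div_eq_mul_inv]
  congr 2
  ring

/-- For `0 < k ≤ 1`, with `Ẽ[Z] = Φ̄(γ) + Φ̄(kγ)` and
`Ẽ[Z²] = e^{γ²}(Φ̄(2γ) + Φ̄((k−1)γ))`, we have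
`Ẽ[Z] = O(e^{−k²γ²/2}/γ)`, `Ẽ[Z²] = O(e^{γ²})`, and the relative second moment
`Ẽ[Z²]/Ẽ[Z]²` grows at least exponentially in `γ`. -/
theorem stmt_13 (k : ℝ) (hk0 : 0 < k) (hk1 : k ≤ 1)
    (Φbar m1 m2 : ℝ → ℝ)
    (hΦbar : ∀ t, Φbar t = ((gaussianReal 0 1) (Set.Ici t)).toReal)
    (hm1 : ∀ γ, m1 γ = Φbar γ + Φbar (k * γ))
    (hm2 : ∀ γ, m2 γ = Real.exp (γ ^ 2) * (Φbar (2 * γ) + Φbar ((k - 1) * γ))) :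
    (m1 =O[atTop] fun γ => Real.exp (-(k ^ 2 * γ ^ 2) / 2) / γ) ∧
    (m2 =O[atTop] fun γ => Real.exp (γ ^ 2)) ∧
    (∃ c > (0 : ℝ), ∀ᶠ γ in atTop, Real.exp (c * γ) ≤ m2 γ / (m1 γ) ^ 2) := by
  have hΦ : ∀ t, Φbar t = gtail t := fun t => hΦbar t
  -- key bound on m1
  have hm1b : ∀ γ : ℝ, 1 ≤ γ → m1 γ ≤ (2 / k) * (Real.exp (-(k ^ 2 * γ ^ 2) / 2) / γ) := by
    intro γ hγ
    have hγ0 : 0 < γ := lt_of_lt_of_le one_pos hγ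
    have hkγ : 0 < k * γ := mul_pos hk0 hγ0
    have h1 : Φbar γ ≤ Φbar (k * γ) := by
      rw [hΦ, hΦ]; exact Gt_anti (by nlinarith)
    have h2 : Φbar (k * γ) ≤ Real.exp (-(k * γ) ^ 2 / 2) / (k * γ) := by
      rw [hΦ]; exact Gt_tail hkγ
    have : m1 γ ≤ 2 * (Real.exp (-(k * γ) ^ 2 / 2) / (k * γ)) := by
      rw [hm1]; linarith
    refine this.trans_eq ?_
    rw [mul_pow]
    field_simp
  refine ⟨?_, ?_, ?_⟩
  · refine isBigO_iff.mpr ⟨2 / k, ?_⟩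
    filter_upwards [eventually_ge_atTop (1:ℝ)] with γ hγ
    have hγ0 : (0:ℝ) < γ := lt_of_lt_of_le one_pos hγ
    have hb := hm1b γ hγ
    have hnn : 0 ≤ m1 γ := by
      rw [hm1]
      have := Gt_nonneg γ; have := Gt_nonneg (k * γ)
      rw [hΦ, hΦ]; linarith
    rw [Real.norm_eq_abs, Real.norm_eq_abs, abs_of_nonneg hnn,
      abs_of_nonneg (by positivity)]
    exact hb
  · refine isBigO_iff.mpr ⟨2, ?_⟩
    filter_upwards with γ
    have h1 : Φbar (2 * γ) ≤ 1 := by rw [hΦ]; exact Gt_le_one _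
    have h2 : Φbar ((k - 1) * γ) ≤ 1 := by rw [hΦ]; exact Gt_le_one _
    have hnn2 : 0 ≤ m2 γ := by
      rw [hm2]
      have := Gt_nonneg (2 * γ); have := Gt_nonneg ((k - 1) * γ)
      rw [hΦ, hΦ]
      positivity
    rw [Real.norm_eq_abs, Real.norm_eq_abs, abs_of_nonneg hnn2,
      abs_of_nonneg (Real.exp_nonneg _), hm2]
    nlinarith [Real.exp_pos (γ ^ 2)]
  · set c₀ : ℝ := gtail 0 with hc₀
    have hc₀pos : 0 < c₀ := Gt_pos 0
    refine ⟨1, one_pos, ?_⟩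
    filter_upwards [eventually_ge_atTop (max 2 (4 / (c₀ * k ^ 2)))] with γ hγ
    have hγ2 : (2:ℝ) ≤ γ := le_trans (le_max_left _ _) hγ
    have hγc : 4 / (c₀ * k ^ 2) ≤ γ := le_trans (le_max_right _ _) hγ
    have hγ1 : (1:ℝ) ≤ γ := by linarith
    have hγ0 : (0:ℝ) < γ := by linarith
    -- lower bound on m2
    have hm2l : c₀ * Real.exp (γ ^ 2) ≤ m2 γ := by
      rw [hm2]
      have h1 : c₀ ≤ Φbar ((k - 1) * γ) := by
        rw [hΦ]; exact Gt_anti (by nlinarith)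
      have h2 : 0 ≤ Φbar (2 * γ) := by rw [hΦ]; exact Gt_nonneg _
      nlinarith [Real.exp_pos (γ ^ 2)]
    -- upper bound on m1
    have hm1u : m1 γ ≤ (2 / k) * Real.exp (-(k ^ 2 * γ ^ 2) / 2) := by
      refine (hm1b γ hγ1).trans ?_
      rw [← mul_div_assoc]
      exact div_le_self (by positivity) hγ1
    have hm1pos : 0 < m1 γ := by
      rw [hm1, hΦ, hΦ]
      have := Gt_pos γ; have := Gt_pos (k * γ); linarith
    have hm1sq : (m1 γ) ^ 2 ≤ (4 / k ^ 2) * Real.exp (-(k ^ 2 * γ ^ 2)) := by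
      calc (m1 γ) ^ 2 ≤ ((2 / k) * Real.exp (-(k ^ 2 * γ ^ 2) / 2)) ^ 2 :=
            pow_le_pow_left₀ hm1pos.le hm1u 2
        _ = (4 / k ^ 2) * Real.exp (-(k ^ 2 * γ ^ 2)) := by
            rw [mul_pow, div_pow, sq (Real.exp _), ← Real.exp_add]
            norm_num
    have h5 : 4 / k ^ 2 ≤ c₀ * γ := by
      have h4 : 4 ≤ γ * (c₀ * k ^ 2) :=
        (div_le_iff₀ (by positivity)).mp hγc
      rw [div_le_iff₀ (by positivity : (0:ℝ) < k ^ 2)]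
      nlinarith
    have h6 : γ ≤ Real.exp (γ ^ 2 + k ^ 2 * γ ^ 2 - γ) := by
      have h61 : γ ≤ γ ^ 2 + k ^ 2 * γ ^ 2 - γ := by nlinarith [sq_nonneg (k * γ)]
      linarith [Real.add_one_le_exp (γ ^ 2 + k ^ 2 * γ ^ 2 - γ)]
    have h7 : 4 / k ^ 2 ≤ c₀ * Real.exp (γ ^ 2 + k ^ 2 * γ ^ 2 - γ) :=
      h5.trans (mul_le_mul_of_nonneg_left h6 hc₀pos.le)
    have key : Real.exp γ * ((4 / k ^ 2) * Real.exp (-(k ^ 2 * γ ^ 2)))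
        ≤ c₀ * Real.exp (γ ^ 2) := by
      calc Real.exp γ * ((4 / k ^ 2) * Real.exp (-(k ^ 2 * γ ^ 2)))
          ≤ Real.exp γ * ((c₀ * Real.exp (γ ^ 2 + k ^ 2 * γ ^ 2 - γ)) *
              Real.exp (-(k ^ 2 * γ ^ 2))) := by
            refine mul_le_mul_of_nonneg_left ?_ (Real.exp_nonneg γ)
            exact mul_le_mul_of_nonneg_right h7 (Real.exp_nonneg _)
        _ = c₀ * (Real.exp γ * (Real.exp (γ ^ 2 + k ^ 2 * γ ^ 2 - γ) *
              Real.exp (-(k ^ 2 * γ ^ 2)))) := by ring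
        _ = c₀ * Real.exp (γ ^ 2) := by
            rw [← Real.exp_add, ← Real.exp_add]
            congr 1
            ring
    rw [one_mul, le_div_iff₀ (pow_pos hm1pos 2)]
    calc Real.exp γ * (m1 γ) ^ 2
        = (m1 γ) ^ 2 * Real.exp γ := by ring
      _ ≤ ((4 / k ^ 2) * Real.exp (-(k ^ 2 * γ ^ 2))) * Real.exp γ :=
          mul_le_mul_of_nonneg_right hm1sq (Real.exp_nonneg γ)
      _ = Real.exp γ * ((4 / k ^ 2) * Real.exp (-(k ^ 2 * γ ^ 2))) := by ring
      _ ≤ c₀ * Real.exp (γ ^ 2) := key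
      _ ≤ m2 γ := hm2l
end

section
/- The constraint y = max(x_1, ..., x_n) for scalars with |x_i| < M and |y| ≤ M is equivalent to the mixed-integer system: y ≤ x_i + 2M(1 − z_i) for all i, y ≥ x_i for all i, ∑_i z_i = 1, z_i ∈ {0,1}. -/
/-- Big-M mixed-integer reformulation of the max constraint: for `|xᵢ| < M`
and `|y| ≤ M`, `y = max(x₁,…,xₙ)` holds iff there are binaries `z₁,…,zₙ`
summing to one with `y ≤ xᵢ + 2M(1 − zᵢ)` and `y ≥ xᵢ` for all `i`. -/
theorem stmt_18 (n : ℕ) (hn : 0 < n) (M : ℝ) (hM : 0 < M)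
    (x : Fin n → ℝ) (hx : ∀ i, |x i| < M) (y : ℝ) (hy : |y| ≤ M) :
    y = Finset.univ.sup' (Finset.univ_nonempty_iff.2 ⟨⟨0, hn⟩⟩) x ↔
      ∃ z : Fin n → ℝ, (∀ i, z i = 0 ∨ z i = 1) ∧
        (∀ i, y ≤ x i + 2 * M * (1 - z i)) ∧ (∀ i, x i ≤ y) ∧ ∑ i, z i = 1 := by
  have hne : (Finset.univ : Finset (Fin n)).Nonempty := Finset.univ_nonempty_iff.2 ⟨⟨0, hn⟩⟩
  constructor
  · intro hmax
    obtain ⟨i₀, _, hi₀⟩ := Finset.exists_mem_eq_sup' hne x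
    refine ⟨fun i => if i = i₀ then 1 else 0, ?_, ?_, ?_, ?_⟩
    · intro i; by_cases h : i = i₀ <;> simp [h]
    · intro i
      by_cases h : i = i₀
      · simp [h, hmax, hi₀]
      · simp only [if_neg h]
        have h1 : y ≤ M := (abs_le.1 hy).2
        have h2 : -M < x i := (abs_lt.1 (hx i)).1
        nlinarith
    · intro i
      rw [hmax]
      exact Finset.le_sup' x (Finset.mem_univ i)
    · rw [Finset.sum_ite_eq' Finset.univ i₀ (fun _ => (1:ℝ))]
      simp
  · rintro ⟨z, hz01, hub, hlb, hsum⟩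
    have : ∃ i, z i = 1 := by
      by_contra h
      push_neg at h
      have : ∀ i ∈ Finset.univ, z i = 0 := fun i _ => (hz01 i).resolve_right (h i)
      rw [Finset.sum_eq_zero this] at hsum
      norm_num at hsum
    obtain ⟨i, hi⟩ := this
    have h1 : y ≤ x i := by have := hub i; rw [hi] at this; linarith
    have h2 : y = x i := le_antisymm h1 (hlb i)
    apply le_antisymm
    · rw [h2]; exact Finset.le_sup' x (Finset.mem_univ i)
    · exact Finset.sup'_le hne x fun j _ => hlb j
end
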